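/- For l = 1, 2 let (ψ^l, φ^l) extend automata on the same finite sets Q, S ⊂ ℝ and be (δ, μ)-stable (0 < δ < 1, 0 ≤ μ < 1), and suppose that for some R ⊆ Q the induced state dynamics agree over R: for every q ∈ R and every k ∈ S^ℕ, the output sequences A^{(ψ¹,φ¹)}_q(k) and A^{(ψ²,φ²)}_q(k) coincide. Let t > 1, M ≥ 1 and C ≥ 1 satisfy M < C^{1−μ} and log_t C ≤ δ/2. For l = 1, 2 let f^l, g^l be positive functions that are (t,M)-close to ψ^l and φ^l respectively, and let (z_l(i,j), w_l(i,j)) be the rational state system for (f^l, g^l) with initial data satisfying C^{−1}·t^{k_i} ≤ z_i(l) ≤ C·t^{k_i} and C^{−1}·t^{q^j} ≤ w^j(l) ≤ C·t^{q^j} for some fixed k ∈ S^ℕ and q ∈ R^ℕ. Then max(z_1(i,j)/z_2(i,j), z_2(i,j)/z_1(i,j)) < C⁴ for all i, j. -/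

import Mathlib

/-- The internal state sequence of the automaton `(ψ, φ)` with initial state `q`
reading the input tape `k`: `q_0 = q`, `q_{i+1} = φ(q_i, k_i, …, k_{i+β})`. -/
def qSeq (β : ℕ) (φ : (Fin (β + 2) → ℝ) → ℝ) (q : ℝ) (k : ℕ → ℝ) : ℕ → ℝ
  | 0 => q
  | i + 1 => φ (Fin.cons (qSeq β φ q k i) (fun m : Fin (β + 1) => k (i + (m : ℕ))))

/-- The output sequence `A^{(ψ,φ)}_q(k)`: `k'_i = ψ(q_i, k_i, …, k_{i+α})`. -/
def outSeq (α β : ℕ) (ψ : (Fin (α + 2) → ℝ) → ℝ) (φ : (Fin (β + 2) → ℝ) → ℝ)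
    (q : ℝ) (k : ℕ → ℝ) : ℕ → ℝ :=
  fun i => ψ (Fin.cons (qSeq β φ q k i) (fun m : Fin (α + 1) => k (i + (m : ℕ))))

def rowSeq (α β : ℕ) (ψ : (Fin (α + 2) → ℝ) → ℝ) (φ : (Fin (β + 2) → ℝ) → ℝ)
    (q0 k0 : ℕ → ℝ) : ℕ → ℕ → ℝ
  | 0 => k0
  | j + 1 => outSeq α β ψ φ (q0 j) (rowSeq α β ψ φ q0 k0 j)

lemma qSeq_mem (β : ℕ) (φ : (Fin (β + 2) → ℝ) → ℝ) (Q S : Finset ℝ)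
    (hext : ∀ (q : ℝ) (s : Fin (β + 1) → ℝ), q ∈ Q → (∀ k, s k ∈ S) → φ (Fin.cons q s) ∈ Q)
    (q : ℝ) (hq : q ∈ Q) (k : ℕ → ℝ) (hk : ∀ i, k i ∈ S) :
    ∀ i, qSeq β φ q k i ∈ Q := by
  intro i
  induction i with
  | zero => exact hq
  | succ i ih => exact hext _ _ ih (fun m => hk _)

lemma initBound {t C a x : ℝ} (ht : 1 < t) (hC : 1 ≤ C)
    (h1 : C⁻¹ * t ^ a ≤ x) (h2 : x ≤ C * t ^ a) :
    0 < x ∧ |Real.log x / Real.log t - a| ≤ Real.log C / Real.log t := by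
  have ht0 : 0 < t := lt_trans one_pos ht
  have hlt : 0 < Real.log t := Real.log_pos ht
  have hC0 : 0 < C := lt_of_lt_of_le one_pos hC
  have hta : 0 < t ^ a := Real.rpow_pos_of_pos ht0 a
  have hx0 : 0 < x := lt_of_lt_of_le (by positivity) h1
  have hup : Real.log x ≤ Real.log C + a * Real.log t := by
    have h := Real.log_le_log hx0 h2
    rwa [Real.log_mul (ne_of_gt hC0) (ne_of_gt hta), Real.log_rpow ht0] at h
  have hlo : -Real.log C + a * Real.log t ≤ Real.log x := by
    have h := Real.log_le_log (by positivity) h1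
    rwa [Real.log_mul (by positivity) (ne_of_gt hta), Real.log_inv, Real.log_rpow ht0] at h
  refine ⟨hx0, ?_⟩
  have e : Real.log x / Real.log t - a = (Real.log x - a * Real.log t) / Real.log t := by
    field_simp
  rw [e, abs_div, abs_of_pos hlt]
  have : |Real.log x - a * Real.log t| ≤ Real.log C :=
    abs_le.2 ⟨by linarith, by linarith⟩
  gcongr

lemma keyStep {n : ℕ} (ψ : (Fin n → ℝ) → ℝ) (μ δ logC logM : ℝ)
    (hμ0 : 0 ≤ μ) (hlogC0 : 0 ≤ logC) (hδ : logC < δ)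
    (hMle : logM ≤ (1 - μ) * logC)
    (v w : Fin n → ℝ) (hvw : ∀ k, |v k - w k| ≤ logC)
    (hstab : ∀ v' : Fin n → ℝ, dist v' w < δ → |ψ v' - ψ w| ≤ μ * dist v' w)
    (u : ℝ) (hclose : |u - ψ v| ≤ logM) : |u - ψ w| ≤ logC := by
  have hd : dist v w ≤ logC :=
    (dist_pi_le_iff hlogC0).2 (fun k => by rw [Real.dist_eq]; exact hvw k)
  have h1 : |ψ v - ψ w| ≤ μ * logC :=
    le_trans (hstab v (lt_of_le_of_lt hd hδ)) (mul_le_mul_of_nonneg_left hd hμ0)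
  calc |u - ψ w| ≤ |u - ψ v| + |ψ v - ψ w| := abs_sub_le _ _ _
    _ ≤ logM + μ * logC := add_le_add hclose h1
    _ ≤ (1 - μ) * logC + μ * logC := by linarith
    _ = logC := by ring

lemma mainBound (α β : ℕ) (Q S : Finset ℝ) (δ μ : ℝ)
    (ψ : (Fin (α + 2) → ℝ) → ℝ) (φ : (Fin (β + 2) → ℝ) → ℝ)
    (hext1 : ∀ (q : ℝ) (s : Fin (α + 1) → ℝ), q ∈ Q → (∀ k, s k ∈ S) →
      ψ (Fin.cons q s) ∈ S)
    (hext2 : ∀ (q : ℝ) (s : Fin (β + 1) → ℝ), q ∈ Q → (∀ k, s k ∈ S) →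
      φ (Fin.cons q s) ∈ Q)
    (hstab1 : ∀ (q : ℝ) (s : Fin (α + 1) → ℝ), q ∈ Q → (∀ k, s k ∈ S) →
      ∀ v : Fin (α + 2) → ℝ, dist v (Fin.cons q s) < δ →
        |ψ v - ψ (Fin.cons q s)| ≤ μ * dist v (Fin.cons q s))
    (hstab2 : ∀ (q : ℝ) (s : Fin (β + 1) → ℝ), q ∈ Q → (∀ k, s k ∈ S) →
      ∀ v : Fin (β + 2) → ℝ, dist v (Fin.cons q s) < δ →
        |φ v - φ (Fin.cons q s)| ≤ μ * dist v (Fin.cons q s))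
    (t C : ℝ) (ht : 1 < t) (hC : 1 ≤ C) (hμ0 : 0 ≤ μ)
    (hMle : Real.log (M : ℝ) / Real.log t ≤ (1 - μ) * (Real.log C / Real.log t))
    (hCδ : Real.log C / Real.log t < δ)
    (f : (Fin (α + 2) → ℝ) → ℝ) (g : (Fin (β + 2) → ℝ) → ℝ)
    (hfpos : ∀ v : Fin (α + 2) → ℝ, (∀ k, 0 < v k) → 0 < f v)
    (hgpos : ∀ v : Fin (β + 2) → ℝ, (∀ k, 0 < v k) → 0 < g v)
    (hf : ∀ v : Fin (α + 2) → ℝ, (∀ k, 0 < v k) →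
      |Real.log (f v) / Real.log t - ψ (fun k => Real.log (v k) / Real.log t)|
        ≤ Real.log M / Real.log t)
    (hg : ∀ v : Fin (β + 2) → ℝ, (∀ k, 0 < v k) →
      |Real.log (g v) / Real.log t - φ (fun k => Real.log (v k) / Real.log t)|
        ≤ Real.log M / Real.log t)
    (k0 q0 : ℕ → ℝ) (hk0 : ∀ i, k0 i ∈ S) (hq0 : ∀ j, q0 j ∈ Q)
    (z w : ℕ → ℕ → ℝ)
    (hz0 : ∀ i, C⁻¹ * t ^ k0 i ≤ z i 0 ∧ z i 0 ≤ C * t ^ k0 i)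
    (hw0 : ∀ j, C⁻¹ * t ^ q0 j ≤ w 0 j ∧ w 0 j ≤ C * t ^ q0 j)
    (hz : ∀ i j, z i (j + 1) = f (Fin.cons (w i j) (fun k : Fin (α + 1) => z (i + (k : ℕ)) j)))
    (hw : ∀ i j, w (i + 1) j = g (Fin.cons (w i j) (fun k : Fin (β + 1) => z (i + (k : ℕ)) j))) :
    ∀ j i, 0 < z i j ∧
      |Real.log (z i j) / Real.log t - rowSeq α β ψ φ q0 k0 j i| ≤ Real.log C / Real.log t := by
  have hlogC0 : 0 ≤ Real.log C / Real.log t :=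
    div_nonneg (Real.log_nonneg hC) (le_of_lt (Real.log_pos ht))
  -- membership of the ideal rows in S
  have hrowsS : ∀ j i, rowSeq α β ψ φ q0 k0 j i ∈ S := by
    intro j
    induction j with
    | zero => exact hk0
    | succ j ih =>
      intro i
      exact hext1 _ _ (qSeq_mem β φ Q S hext2 (q0 j) (hq0 j) _ ih i) (fun m => ih _)
  intro j
  induction j with
  | zero =>
    intro i
    exact initBound ht hC (hz0 i).1 (hz0 i).2
  | succ j ih =>
    -- states along row j are in Q
    have hqQ : ∀ i, qSeq β φ (q0 j) (rowSeq α β ψ φ q0 k0 j) i ∈ Q :=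
      qSeq_mem β φ Q S hext2 (q0 j) (hq0 j) _ (hrowsS j)
    -- bound for w along row j
    have hwb : ∀ i, 0 < w i j ∧
        |Real.log (w i j) / Real.log t - qSeq β φ (q0 j) (rowSeq α β ψ φ q0 k0 j) i|
          ≤ Real.log C / Real.log t := by
      intro i
      induction i with
      | zero => exact initBound ht hC (hw0 j).1 (hw0 j).2
      | succ i ihw =>
        have hVpos : ∀ k, 0 < (Fin.cons (w i j) (fun m : Fin (β + 1) => z (i + (m : ℕ)) j)
            : Fin (β + 2) → ℝ) k := by
          intro k
          refine Fin.cases ?_ ?_ k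
          · simpa using ihw.1
          · intro m; simpa using (ih (i + (m : ℕ))).1
        constructor
        · rw [hw i j]; exact hgpos _ hVpos
        · rw [hw i j]
          show |Real.log (g _) / Real.log t - φ _| ≤ _
          refine keyStep φ μ δ _ _ hμ0 hlogC0 hCδ hMle _ _ ?_
            (hstab2 _ (fun m => rowSeq α β ψ φ q0 k0 j (i + (m : ℕ))) (hqQ i)
              (fun m => hrowsS j _)) _ (hg _ hVpos)
          intro k
          refine Fin.cases ?_ ?_ k
          · simpa using ihw.2
          · intro m; simpa using (ih (i + (m : ℕ))).2
    intro i
    have hVpos : ∀ k, 0 < (Fin.cons (w i j) (fun m : Fin (α + 1) => z (i + (m : ℕ)) j)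
        : Fin (α + 2) → ℝ) k := by
      intro k
      refine Fin.cases ?_ ?_ k
      · simpa using (hwb i).1
      · intro m; simpa using (ih (i + (m : ℕ))).1
    constructor
    · rw [hz i j]; exact hfpos _ hVpos
    · rw [hz i j]
      show |Real.log (f _) / Real.log t - ψ _| ≤ _
      refine keyStep ψ μ δ _ _ hμ0 hlogC0 hCδ hMle _ _ ?_
        (hstab1 _ (fun m => rowSeq α β ψ φ q0 k0 j (i + (m : ℕ))) (hqQ i)
          (fun m => hrowsS j _)) _ (hf _ hVpos)
      intro k
      refine Fin.cases ?_ ?_ k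
      · simpa using (hwb i).2
      · intro m; simpa using (ih (i + (m : ℕ))).2


/-- rational state systems attached to two stable extensions of automata
that are equivalent over `R ⊆ Q`, with exponentially comparable initial data, stay at
ratio `< C⁴`. -/
theorem statement16 (α β : ℕ) (Q S R : Finset ℝ) (hR : R ⊆ Q) (δ μ : ℝ)
    (hδ0 : 0 < δ) (hδ1 : δ < 1) (hμ0 : 0 ≤ μ) (hμ1 : μ < 1)
    (ψ1 ψ2 : (Fin (α + 2) → ℝ) → ℝ) (φ1 φ2 : (Fin (β + 2) → ℝ) → ℝ)
    (hext11 : ∀ (q : ℝ) (s : Fin (α + 1) → ℝ), q ∈ Q → (∀ k, s k ∈ S) →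
      ψ1 (Fin.cons q s) ∈ S)
    (hext12 : ∀ (q : ℝ) (s : Fin (β + 1) → ℝ), q ∈ Q → (∀ k, s k ∈ S) →
      φ1 (Fin.cons q s) ∈ Q)
    (hext21 : ∀ (q : ℝ) (s : Fin (α + 1) → ℝ), q ∈ Q → (∀ k, s k ∈ S) →
      ψ2 (Fin.cons q s) ∈ S)
    (hext22 : ∀ (q : ℝ) (s : Fin (β + 1) → ℝ), q ∈ Q → (∀ k, s k ∈ S) →
      φ2 (Fin.cons q s) ∈ Q)
    (hstab11 : ∀ (q : ℝ) (s : Fin (α + 1) → ℝ), q ∈ Q → (∀ k, s k ∈ S) →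
      ∀ v : Fin (α + 2) → ℝ, dist v (Fin.cons q s) < δ →
        |ψ1 v - ψ1 (Fin.cons q s)| ≤ μ * dist v (Fin.cons q s))
    (hstab12 : ∀ (q : ℝ) (s : Fin (β + 1) → ℝ), q ∈ Q → (∀ k, s k ∈ S) →
      ∀ v : Fin (β + 2) → ℝ, dist v (Fin.cons q s) < δ →
        |φ1 v - φ1 (Fin.cons q s)| ≤ μ * dist v (Fin.cons q s))
    (hstab21 : ∀ (q : ℝ) (s : Fin (α + 1) → ℝ), q ∈ Q → (∀ k, s k ∈ S) →
      ∀ v : Fin (α + 2) → ℝ, dist v (Fin.cons q s) < δ →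
        |ψ2 v - ψ2 (Fin.cons q s)| ≤ μ * dist v (Fin.cons q s))
    (hstab22 : ∀ (q : ℝ) (s : Fin (β + 1) → ℝ), q ∈ Q → (∀ k, s k ∈ S) →
      ∀ v : Fin (β + 2) → ℝ, dist v (Fin.cons q s) < δ →
        |φ2 v - φ2 (Fin.cons q s)| ≤ μ * dist v (Fin.cons q s))
    (hagree : ∀ q0 ∈ R, ∀ k : ℕ → ℝ, (∀ i, k i ∈ S) →
      outSeq α β ψ1 φ1 q0 k = outSeq α β ψ2 φ2 q0 k)
    (t M C : ℝ) (ht : 1 < t) (hM : 1 ≤ M) (hC : 1 ≤ C)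
    (hMC : M < C ^ (1 - μ)) (hCδ : Real.log C / Real.log t ≤ δ / 2)
    (f1 f2 : (Fin (α + 2) → ℝ) → ℝ) (g1 g2 : (Fin (β + 2) → ℝ) → ℝ)
    (hf1pos : ∀ v : Fin (α + 2) → ℝ, (∀ k, 0 < v k) → 0 < f1 v)
    (hf2pos : ∀ v : Fin (α + 2) → ℝ, (∀ k, 0 < v k) → 0 < f2 v)
    (hg1pos : ∀ v : Fin (β + 2) → ℝ, (∀ k, 0 < v k) → 0 < g1 v)
    (hg2pos : ∀ v : Fin (β + 2) → ℝ, (∀ k, 0 < v k) → 0 < g2 v)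
    (hf1 : ∀ v : Fin (α + 2) → ℝ, (∀ k, 0 < v k) →
      |Real.log (f1 v) / Real.log t - ψ1 (fun k => Real.log (v k) / Real.log t)|
        ≤ Real.log M / Real.log t)
    (hg1 : ∀ v : Fin (β + 2) → ℝ, (∀ k, 0 < v k) →
      |Real.log (g1 v) / Real.log t - φ1 (fun k => Real.log (v k) / Real.log t)|
        ≤ Real.log M / Real.log t)
    (hf2 : ∀ v : Fin (α + 2) → ℝ, (∀ k, 0 < v k) →
      |Real.log (f2 v) / Real.log t - ψ2 (fun k => Real.log (v k) / Real.log t)|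
        ≤ Real.log M / Real.log t)
    (hg2 : ∀ v : Fin (β + 2) → ℝ, (∀ k, 0 < v k) →
      |Real.log (g2 v) / Real.log t - φ2 (fun k => Real.log (v k) / Real.log t)|
        ≤ Real.log M / Real.log t)
    (k0 q0 : ℕ → ℝ) (hk0 : ∀ i, k0 i ∈ S) (hq0 : ∀ j, q0 j ∈ R)
    (z1 w1 z2 w2 : ℕ → ℕ → ℝ)
    (hz10 : ∀ i, C⁻¹ * t ^ k0 i ≤ z1 i 0 ∧ z1 i 0 ≤ C * t ^ k0 i)
    (hw10 : ∀ j, C⁻¹ * t ^ q0 j ≤ w1 0 j ∧ w1 0 j ≤ C * t ^ q0 j)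
    (hz20 : ∀ i, C⁻¹ * t ^ k0 i ≤ z2 i 0 ∧ z2 i 0 ≤ C * t ^ k0 i)
    (hw20 : ∀ j, C⁻¹ * t ^ q0 j ≤ w2 0 j ∧ w2 0 j ≤ C * t ^ q0 j)
    (hz1 : ∀ i j, z1 i (j + 1) = f1 (Fin.cons (w1 i j) (fun k : Fin (α + 1) => z1 (i + (k : ℕ)) j)))
    (hw1 : ∀ i j, w1 (i + 1) j = g1 (Fin.cons (w1 i j) (fun k : Fin (β + 1) => z1 (i + (k : ℕ)) j)))
    (hz2 : ∀ i j, z2 i (j + 1) = f2 (Fin.cons (w2 i j) (fun k : Fin (α + 1) => z2 (i + (k : ℕ)) j)))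
    (hw2 : ∀ i j, w2 (i + 1) j = g2 (Fin.cons (w2 i j) (fun k : Fin (β + 1) => z2 (i + (k : ℕ)) j))) :
    ∀ i j : ℕ, max (z1 i j / z2 i j) (z2 i j / z1 i j) < C ^ 4 := by
  have hlt : 0 < Real.log t := Real.log_pos ht
  have hq0Q : ∀ j, q0 j ∈ Q := fun j => hR (hq0 j)
  have hC1 : 1 < C := by
    by_contra h
    push_neg at h
    have hCe : C = 1 := le_antisymm h hC
    rw [hCe, Real.one_rpow] at hMC
    linarith
  have hMle : Real.log M / Real.log t ≤ (1 - μ) * (Real.log C / Real.log t) := by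
    have h := Real.log_le_log (lt_of_lt_of_le one_pos hM) (le_of_lt hMC)
    rw [Real.log_rpow (lt_trans one_pos hC1)] at h
    rw [← mul_div_assoc]
    gcongr
  have hCδ' : Real.log C / Real.log t < δ := lt_of_le_of_lt hCδ (by linarith)
  have H1 := mainBound α β Q S δ μ ψ1 φ1 hext11 hext12 hstab11 hstab12 t C ht hC hμ0
    hMle hCδ' f1 g1 hf1pos hg1pos hf1 hg1 k0 q0 hk0 hq0Q z1 w1 hz10 hw10 hz1 hw1
  have H2 := mainBound α β Q S δ μ ψ2 φ2 hext21 hext22 hstab21 hstab22 t C ht hC hμ0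
    hMle hCδ' f2 g2 hf2pos hg2pos hf2 hg2 k0 q0 hk0 hq0Q z2 w2 hz20 hw20 hz2 hw2
  -- the ideal rows of the two systems agree
  have hrowsS : ∀ j i, rowSeq α β ψ1 φ1 q0 k0 j i ∈ S := by
    intro j
    induction j with
    | zero => exact hk0
    | succ j ih =>
      intro i
      exact hext11 _ _ (qSeq_mem β φ1 Q S hext12 (q0 j) (hq0Q j) _ ih i) (fun m => ih _)
  have hrows : ∀ j, rowSeq α β ψ1 φ1 q0 k0 j = rowSeq α β ψ2 φ2 q0 k0 j := by
    intro j
    induction j with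
    | zero => rfl
    | succ j ih =>
      show outSeq α β ψ1 φ1 (q0 j) _ = outSeq α β ψ2 φ2 (q0 j) _
      rw [← ih]
      exact hagree (q0 j) (hq0 j) _ (hrowsS j)
  intro i j
  obtain ⟨hz1p, hb1⟩ := H1 j i
  obtain ⟨hz2p, hb2⟩ := H2 j i
  rw [← hrows j] at hb2
  set x := rowSeq α β ψ1 φ1 q0 k0 j i with hx
  have hdiff : |Real.log (z1 i j) - Real.log (z2 i j)| ≤ 2 * Real.log C := by
    have h3 : |Real.log (z1 i j) / Real.log t - Real.log (z2 i j) / Real.log t|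
        ≤ 2 * (Real.log C / Real.log t) := by
      calc |Real.log (z1 i j) / Real.log t - Real.log (z2 i j) / Real.log t|
          ≤ |Real.log (z1 i j) / Real.log t - x| + |x - Real.log (z2 i j) / Real.log t| :=
            abs_sub_le _ _ _
        _ ≤ 2 * (Real.log C / Real.log t) := by
            rw [abs_sub_comm x]; linarith
    rw [div_sub_div_same, abs_div, abs_of_pos hlt, div_le_iff₀ hlt] at h3
    have e2 : 2 * (Real.log C / Real.log t) * Real.log t = 2 * Real.log C := by
      field_simp
    linarith
  have key : ∀ a b : ℝ, 0 < a → 0 < b → Real.log a - Real.log b ≤ 2 * Real.log C →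
      a / b < C ^ 4 := by
    intro a b ha hb hab
    have hlog : Real.log (a / b) ≤ Real.log (C ^ 2) := by
      rw [Real.log_div (ne_of_gt ha) (ne_of_gt hb), Real.log_pow]
      push_cast
      linarith
    have h2 : a / b ≤ C ^ 2 :=
      (Real.log_le_log_iff (by positivity) (by positivity)).1 hlog
    have h1 : 1 < C ^ 2 := by nlinarith
    have h4 : C ^ 2 < C ^ 4 := by nlinarith [sq_nonneg C, h1]
    linarith
  refine max_lt (key _ _ hz1p hz2p (abs_le.1 hdiff).2) (key _ _ hz2p hz1p ?_)
  have := (abs_le.1 hdiff).1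
  linarith
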